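/- Let Γ : ℝⁿ → ℝ and h : ℝⁿ → ℝ be functions, ν, η ≥ 0 Lipschitz constants such that |Γ(a) − Γ(b)| ≤ ν‖a − b‖ and |h(a) − h(b)| ≤ η‖a − b‖ for all a, b in a compact set X ⊆ ℝⁿ. Let X_g ⊆ X be a finite nonempty set with Γ(x_g) ≤ −h(x_g) for all x_g ∈ X_g, and suppose ρ̄ ≥ 0 satisfies: for every x ∈ X there exists x_g ∈ X_g with ‖x − x_g‖ ≤ ρ̄. Fix 0 < φ < 1 and set ζ = (η + ν) ρ̄ / (1 − φ). Then for every x ∈ X with h(x) ≥ ζ, it holds that Γ(x) ≤ −φ h(x). -/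
import Mathlib

theorem granularity_bound {n : ℕ}
    (X : Set (EuclideanSpace ℝ (Fin n))) (hX : IsCompact X)
    (Γ h : EuclideanSpace ℝ (Fin n) → ℝ)
    (ν η : ℝ) (hν : 0 ≤ ν) (hη : 0 ≤ η)
    (hΓlip : ∀ a ∈ X, ∀ b ∈ X, |Γ a - Γ b| ≤ ν * ‖a - b‖)
    (hhlip : ∀ a ∈ X, ∀ b ∈ X, |h a - h b| ≤ η * ‖a - b‖)
    (Xg : Set (EuclideanSpace ℝ (Fin n))) (hXg : Xg ⊆ X)
    (hXgfin : Xg.Finite) (hXgne : Xg.Nonempty)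
    (hgrid : ∀ xg ∈ Xg, Γ xg ≤ -h xg)
    (ρbar : ℝ) (hρ : 0 ≤ ρbar)
    (hcover : ∀ x ∈ X, ∃ xg ∈ Xg, ‖x - xg‖ ≤ ρbar)
    (φ : ℝ) (hφ0 : 0 < φ) (hφ1 : φ < 1) :
    ∀ x ∈ X, (η + ν) * ρbar / (1 - φ) ≤ h x → Γ x ≤ -φ * h x := by
  intro x hx hζ
  obtain ⟨xg, hxg, hdist⟩ := hcover x hx
  have hxg' := hXg hxg
  have h1 : Γ x - Γ xg ≤ ν * ρbar := by
    have := hΓlip x hx xg hxg'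
    have := le_abs_self (Γ x - Γ xg)
    nlinarith [hΓlip x hx xg hxg', le_abs_self (Γ x - Γ xg)]
  have h2 : h xg - h x ≥ -(η * ρbar) := by
    nlinarith [hhlip xg hxg' x hx, neg_abs_le (h xg - h x), norm_sub_rev x xg]
  have h3 := hgrid xg hxg
  have h1φ : 0 < 1 - φ := by linarith
  have hζ' : (η + ν) * ρbar ≤ (1 - φ) * h x := by
    rw [div_le_iff₀ h1φ] at hζ; linarith
  linarith
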